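/- Let X be a complex manifold, T ⊂ X a compact set, and K ⊂ ℂ a convex compact set with 0 ∉ K. Let a_1, …, a_{i_0} ∈ ℂ \ {0} be finitely many points and (c_j)_{j∈ℕ} ⊂ ℂ \ {0} a discrete sequence. Given a holomorphic function β on X, ε > 0 and r, N ∈ ℕ, there exists a holomorphic function f : X × ℂ → ℂ such that: (1) |f(x,ζ)| < ε for all (x,ζ) ∈ T × K; (2) f_x(ζ) = β(x) ζ^r + O(|ζ|^{r+1}) as ζ → 0, for every x ∈ X; (3) f_x(ζ) = O(|ζ − a_i|^N) as ζ → a_i for every i = 1, …, i_0 and every x ∈ X; (4) f_x(c_j) = 0 for every x ∈ X and every j ∈ ℕ. -/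

import Mathlib

open scoped Topology
open Asymptotics Set Filter

noncomputable section

/-- The complex Euclidean space `ℂⁿ`. -/
abbrev Cn (n : ℕ) := EuclideanSpace ℂ (Fin n)

/-- A map is holomorphic on a subset `S` of a complex normed space if near every point of `S`
it agrees on `S` with a map holomorphic on an open neighborhood of that point. -/
def HoloOn {E F : Type} [NormedAddCommGroup E] [NormedSpace ℂ E]
    [NormedAddCommGroup F] [NormedSpace ℂ F] (S : Set E) (f : E → F) : Prop :=
  ∀ p ∈ S, ∃ U : Set E, IsOpen U ∧ p ∈ U ∧ ∃ g : E → F,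
    DifferentiableOn ℂ g U ∧ EqOn f g (S ∩ U)

/-- `X ⊆ ℂ^N` is a closed analytic subset: it is closed and locally cut out by finitely many
holomorphic functions.  By the embedding theorem this is a model for a finite dimensional
reduced Stein space. -/
def IsClosedAnalyticSubset {N : ℕ} (X : Set (Cn N)) : Prop :=
  IsClosed X ∧ ∀ p ∈ X, ∃ U : Set (Cn N), IsOpen U ∧ p ∈ U ∧
    ∃ (m : ℕ) (g : Fin m → Cn N → ℂ), (∀ i, DifferentiableOn ℂ (g i) U) ∧
      X ∩ U = {z ∈ U | ∀ i, g i z = 0}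

/-- `X ⊆ ℂ^N` is a closed complex submanifold of `ℂ^N` (locally biholomorphically
straightened to a coordinate subspace).  By the embedding theorem this is a model for a
Stein manifold. -/
def IsSteinSubmanifold {N : ℕ} (X : Set (Cn N)) : Prop :=
  IsClosed X ∧ ∀ p ∈ X, ∃ (d : ℕ) (U : Set (Cn N)) (φ ψ : Cn N → Cn N),
    IsOpen U ∧ p ∈ U ∧ DifferentiableOn ℂ φ U ∧ IsOpen (φ '' U) ∧
    DifferentiableOn ℂ ψ (φ '' U) ∧ (∀ z ∈ U, ψ (φ z) = z) ∧
    X ∩ U = {z ∈ U | ∀ i : Fin N, d ≤ (i : ℕ) → φ z i = 0}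

/-- `f` is a holomorphic automorphism of `ℂⁿ`. -/
def IsAutCn {n : ℕ} (f : Cn n → Cn n) : Prop :=
  Function.Bijective f ∧ Differentiable ℂ f ∧
    ∃ g : Cn n → Cn n, Differentiable ℂ g ∧
      Function.LeftInverse g f ∧ Function.RightInverse g f

/-- The complex Jacobian matrix of `f` at `z`. -/
def jacMatrix {n : ℕ} (f : Cn n → Cn n) (z : Cn n) : Matrix (Fin n) (Fin n) ℂ :=
  fun i j => fderiv ℂ f z (EuclideanSpace.single j 1) i

/-- The complex Jacobian determinant of `f` at `z`. -/
def jacDet {n : ℕ} (f : Cn n → Cn n) (z : Cn n) : ℂ :=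
  (jacMatrix f z).det

/-- A map `ℂⁿ → ℂⁿ` is volume preserving if its Jacobian determinant is `1` everywhere. -/
def VolumePreserving {n : ℕ} (f : Cn n → Cn n) : Prop :=
  ∀ z, jacDet f z = 1

/-- `f : ℂⁿ → ℂⁿ` is a polynomial map of (total) degree at most `k`. -/
def IsPolyMapDegLe (n k : ℕ) (f : Cn n → Cn n) : Prop :=
  ∃ p : Fin n → MvPolynomial (Fin n) ℂ, (∀ i, (p i).totalDegree ≤ k) ∧
    ∀ z : Cn n, ∀ i : Fin n, f z i = MvPolynomial.eval (fun j => z j) (p i)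

/-- `P` is a holomorphic family, parametrized by `X ⊆ ℂ^N`, of nondegenerate `k`-jets at
`p ∈ ℂⁿ` sending `p` to `q`, i.e. of elements of `J^k_{p,q}(ℂⁿ)`. -/
def IsHolJetFamily {N : ℕ} (X : Set (Cn N)) {n : ℕ} (k : ℕ) (p q : Cn n)
    (P : Cn N → Cn n → Cn n) : Prop :=
  HoloOn (X ×ˢ (univ : Set (Cn n))) (fun w : Cn N × Cn n => P w.1 w.2) ∧
  (∀ x ∈ X, IsPolyMapDegLe n k (P x)) ∧
  (∀ x ∈ X, P x p = q) ∧
  (∀ x ∈ X, (jacMatrix (P x) p).det ≠ 0)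

/-- `F` is a holomorphic family, parametrized by `X`, of holomorphic automorphisms of `ℂⁿ`,
i.e. a holomorphic map `X → Aut(ℂⁿ)`. -/
def IsHolFamilyAut {N n : ℕ} (X : Set (Cn N)) (F : Cn N → Cn n → Cn n) : Prop :=
  (∀ x ∈ X, IsAutCn (F x)) ∧
  HoloOn (X ×ˢ (univ : Set (Cn n))) (fun w : Cn N × Cn n => F w.1 w.2)

/-- The family `F : X → Aut(ℂⁿ)` is nullhomotopic: it is homotopic, through families of
holomorphic automorphisms, to a constant family. -/
def NullhomotopicFamilyAut {N n : ℕ} (X : Set (Cn N)) (F : Cn N → Cn n → Cn n) : Prop :=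
  ∃ H : ℝ → Cn N → Cn n → Cn n,
    ContinuousOn (fun w : ℝ × Cn N × Cn n => H w.1 w.2.1 w.2.2)
      (Icc (0 : ℝ) 1 ×ˢ X ×ˢ (univ : Set (Cn n))) ∧
    (∀ t ∈ Icc (0 : ℝ) 1, ∀ x ∈ X, IsAutCn (H t x)) ∧
    (∀ x ∈ X, H 1 x = F x) ∧
    (∃ f₀, ∀ x ∈ X, H 0 x = f₀)

/-- A matrix-valued map on `X` is nullhomotopic as a map into `GLₙ(ℂ)`: it is homotopic,
through maps with invertible values, to a constant map. -/
def NullhomotopicToGL {N n : ℕ} (X : Set (Cn N)) (Q : Cn N → Matrix (Fin n) (Fin n) ℂ) : Prop :=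
  ∃ H : ℝ → Cn N → Matrix (Fin n) (Fin n) ℂ,
    (∀ i j, ContinuousOn (fun w : ℝ × Cn N => H w.1 w.2 i j) (Icc (0 : ℝ) 1 ×ˢ X)) ∧
    (∀ t ∈ Icc (0 : ℝ) 1, ∀ x ∈ X, (H t x).det ≠ 0) ∧
    (∀ x ∈ X, H 1 x = Q x) ∧
    (∃ A, ∀ x ∈ X, H 0 x = A)

/-- The point `(c, 0, …, 0) ∈ ℂⁿ`. -/
def axisPt (n : ℕ) (c : ℂ) : Cn n :=
  WithLp.toLp 2 (fun i => if (i : ℕ) = 0 then c else 0)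

/-- A sequence in `ℂⁿ` is tame if some holomorphic automorphism takes it to the sequence
`(j, 0, …, 0)`, `j = 1, 2, …`. -/
def TameSeq {n : ℕ} (a : ℕ → Cn n) : Prop :=
  ∃ F : Cn n → Cn n, IsAutCn F ∧ ∀ j : ℕ, F (a j) = axisPt n ((j : ℂ) + 1)

/-- A sequence in `ℂⁿ` is very tame if some volume preserving holomorphic automorphism takes
it to the sequence `(j, 0, …, 0)`, `j = 1, 2, …`. -/
def VeryTameSeq {n : ℕ} (a : ℕ → Cn n) : Prop :=
  ∃ F : Cn n → Cn n, IsAutCn F ∧ VolumePreserving F ∧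
    ∀ j : ℕ, F (a j) = axisPt n ((j : ℂ) + 1)

/-- `X ⊆ ℂ^N` is a (not necessarily closed) complex submanifold of `ℂ^N`;
this is our model for a complex manifold. -/
def IsComplexSubmanifold {N : ℕ} (X : Set (Cn N)) : Prop :=
  ∀ p ∈ X, ∃ (d : ℕ) (U : Set (Cn N)) (φ ψ : Cn N → Cn N),
    IsOpen U ∧ p ∈ U ∧ DifferentiableOn ℂ φ U ∧ IsOpen (φ '' U) ∧
    DifferentiableOn ℂ ψ (φ '' U) ∧ (∀ z ∈ U, ψ (φ z) = z) ∧
    X ∩ U = {z ∈ U | ∀ i : Fin N, d ≤ (i : ℕ) → φ z i = 0}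

section AuxWeierstrass

open Complex Metric


/-- tail of the log series -/
def wTail (j : ℕ) (w : ℂ) : ℂ := ∑' k : ℕ, w ^ (k + (j + 1)) / ((k + (j + 1) : ℕ) : ℂ)

lemma wTail_bound {w : ℂ} (hw : ‖w‖ ≤ 1/2) (j : ℕ) : ‖wTail j w‖ ≤ (1/2) ^ j := by
  have hterm : ∀ k : ℕ, ‖w ^ (k + (j + 1)) / ((k + (j + 1) : ℕ) : ℂ)‖ ≤ (1/2 : ℝ) ^ (k + (j + 1)) := by
    intro k
    rw [norm_div, norm_pow]
    have h1 : (1 : ℝ) ≤ ‖((k + (j + 1) : ℕ) : ℂ)‖ := by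
      rw [Complex.norm_natCast]
      exact_mod_cast Nat.one_le_iff_ne_zero.2 (by omega)
    calc ‖w‖ ^ (k + (j+1)) / ‖((k + (j + 1) : ℕ) : ℂ)‖
        ≤ ‖w‖ ^ (k + (j+1)) / 1 := by
          apply div_le_div_of_nonneg_left (by positivity) one_pos h1
      _ = ‖w‖ ^ (k + (j+1)) := by ring
      _ ≤ (1/2 : ℝ) ^ (k + (j+1)) := pow_le_pow_left₀ (norm_nonneg w) hw _
  have hsum : Summable (fun k : ℕ => (1/2 : ℝ) ^ (k + (j + 1))) := by
    simpa [pow_add] using (summable_geometric_of_lt_one (by norm_num) (by norm_num : (1/2:ℝ) < 1)).mul_right ((1/2:ℝ)^(j+1))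
  have hnorm : Summable (fun k : ℕ => ‖w ^ (k + (j + 1)) / ((k + (j + 1) : ℕ) : ℂ)‖) :=
    Summable.of_nonneg_of_le (fun k => norm_nonneg _) hterm hsum
  calc ‖wTail j w‖ ≤ ∑' k : ℕ, ‖w ^ (k + (j + 1)) / ((k + (j + 1) : ℕ) : ℂ)‖ :=
        norm_tsum_le_tsum_norm hnorm
    _ ≤ ∑' k : ℕ, (1/2 : ℝ) ^ (k + (j + 1)) := Summable.tsum_le_tsum hterm hnorm hsum
    _ = (1/2 : ℝ) ^ (j + 1) * (1 - 1/2)⁻¹ := by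
        simp_rw [pow_add]
        rw [tsum_mul_right, tsum_geometric_of_lt_one (by norm_num) (by norm_num)]
        ring
    _ ≤ (1/2) ^ j := le_of_eq (by rw [pow_succ]; ring)

lemma wTail_summable {w : ℂ} (hw : ‖w‖ < 1) : Summable (fun n : ℕ => w ^ n / (n : ℂ)) :=
  (Complex.hasSum_taylorSeries_neg_log hw).summable

lemma factor_eq {w : ℂ} (hw : ‖w‖ ≤ 1/2) (j : ℕ) :
    (1 - w) * Complex.exp (∑ k ∈ Finset.range j, w ^ (k+1) / ((k+1 : ℕ) : ℂ))
      = Complex.exp (-(wTail j w)) := by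
  have hw1 : ‖w‖ < 1 := lt_of_le_of_lt hw (by norm_num)
  have hne : 1 - w ≠ 0 := by
    intro h
    have : w = 1 := by linear_combination -h
    rw [this] at hw; norm_num at hw
  have hs := Complex.hasSum_taylorSeries_neg_log hw1
  have hsplit := Summable.sum_add_tsum_nat_add (f := fun n : ℕ => w ^ n / (n : ℂ)) (j+1) hs.summable
  have htsum : ∑' n : ℕ, w ^ n / (n : ℂ) = -Complex.log (1 - w) := hs.tsum_eq
  have hrange : ∑ n ∈ Finset.range (j+1), w ^ n / (n : ℂ)
      = ∑ k ∈ Finset.range j, w ^ (k+1) / ((k+1 : ℕ) : ℂ) := by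
    rw [Finset.sum_range_succ']
    simp
  have htail : wTail j w = -Complex.log (1 - w) - ∑ k ∈ Finset.range j, w ^ (k+1) / ((k+1 : ℕ) : ℂ) := by
    rw [← hrange, ← htsum]
    unfold wTail
    linear_combination hsplit
  rw [htail]
  rw [neg_sub, sub_neg_eq_add, Complex.exp_add, Complex.exp_log hne]; ring

def wFactor (c : ℂ) (j : ℕ) (z : ℂ) : ℂ :=
  (1 - z / c) * Complex.exp (∑ k ∈ Finset.range j, (z / c) ^ (k+1) / ((k+1 : ℕ) : ℂ))

lemma wFactor_diff (c : ℂ) (j : ℕ) : Differentiable ℂ (wFactor c j) := by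
  apply Differentiable.mul
  · exact (differentiable_const _).sub (differentiable_id.div_const c)
  · apply Differentiable.cexp
    apply Differentiable.fun_sum
    intro k _
    exact ((differentiable_id.div_const c).pow _).div_const _

lemma wFactor_zero (c : ℂ) (j : ℕ) : wFactor c j 0 = 1 := by
  simp [wFactor]

lemma wFactor_self {c : ℂ} (hc : c ≠ 0) (j : ℕ) : wFactor c j c = 0 := by
  simp [wFactor, div_self hc]

def wProd (c : ℕ → ℂ) (n : ℕ) (z : ℂ) : ℂ := ∏ j ∈ Finset.range n, wFactor (c j) j z

def wLim (c : ℕ → ℂ) (z : ℂ) : ℂ := limUnder atTop (fun n => wProd c n z)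

lemma wProd_diff (c : ℕ → ℂ) (n : ℕ) : Differentiable ℂ (wProd c n) := by
  unfold wProd
  induction n with
  | zero => simpa using differentiable_const (1:ℂ)
  | succ m ih =>
      simp_rw [Finset.prod_range_succ]
      exact ih.mul (wFactor_diff _ _)

/-- Uniform convergence of the partial products on closed balls. -/
lemma wProd_unif (c : ℕ → ℂ) (hc0 : ∀ j, c j ≠ 0)
    (hcn : Tendsto (fun j => ‖c j‖) atTop atTop) {R : ℝ} (hR : 0 < R) :
    ∃ WR : ℂ → ℂ, TendstoUniformlyOn (wProd c) WR atTop (closedBall (0:ℂ) R) := by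
  obtain ⟨J, hJ⟩ := eventually_atTop.mp (hcn.eventually (eventually_ge_atTop (2*R)))
  set s : Set ℂ := closedBall (0:ℂ) R with hs
  have hhalf : ∀ j, J ≤ j → ∀ z ∈ s, ‖z / c j‖ ≤ 1/2 := by
    intro j hj z hz
    rw [norm_div]
    have h2R : (0:ℝ) < 2*R := by linarith
    have hcj := hJ j hj
    have hzR : ‖z‖ ≤ R := by simpa [s, mem_closedBall_zero_iff] using hz
    calc ‖z‖ / ‖c j‖ ≤ R / (2*R) := div_le_div₀ hR.le hzR h2R hcj
      _ = 1/2 := by field_simp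
  set T : ℕ → ℂ → ℂ := fun k z => wTail (J + k) (z / c (J + k)) with hT
  set S : ℂ → ℂ := fun z => ∑' k, T k z with hS
  have hgeo : Summable (fun k : ℕ => (1/2 : ℝ) ^ (J + k)) := by
    simpa [pow_add] using (summable_geometric_of_lt_one (by norm_num)
      (by norm_num : (1/2:ℝ) < 1)).mul_left ((1/2:ℝ)^J)
  have hTb : ∀ k : ℕ, ∀ z ∈ s, ‖T k z‖ ≤ (1/2 : ℝ) ^ (J + k) :=
    fun k z hz => wTail_bound (hhalf (J+k) (Nat.le_add_right _ _) z hz) (J+k)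
  have hTU : TendstoUniformlyOn (fun m z => ∑ k ∈ Finset.range m, T k z) S atTop s :=
    tendstoUniformlyOn_tsum_nat hgeo hTb
  have hSb : ∀ z ∈ s, ‖S z‖ ≤ 2 := by
    intro z hz
    have hsum : Summable (fun k => ‖T k z‖) :=
      Summable.of_nonneg_of_le (fun k => norm_nonneg _) (fun k => hTb k z hz) hgeo
    calc ‖S z‖ ≤ ∑' k, ‖T k z‖ := norm_tsum_le_tsum_norm hsum
      _ ≤ ∑' k : ℕ, (1/2:ℝ) ^ (J + k) := Summable.tsum_le_tsum (fun k => hTb k z hz) hsum hgeo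
      _ = (1/2:ℝ)^J * (1-1/2)⁻¹ := by
          simp_rw [pow_add]
          rw [tsum_mul_left, tsum_geometric_of_lt_one (by norm_num) (by norm_num)]
      _ ≤ 2 := by
          have : (1/2:ℝ)^J ≤ 1 := pow_le_one₀ (by norm_num) (by norm_num)
          nlinarith
  have hexpU : TendstoUniformlyOn (fun m z => Complex.exp (-(∑ k ∈ Finset.range m, T k z)))
      (fun z => Complex.exp (-(S z))) atTop s := by
    rw [Metric.tendstoUniformlyOn_iff]
    intro ε hε
    have hδ : 0 < min 1 (ε / (2 * Real.exp 2 + 1)) := by positivity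
    filter_upwards [Metric.tendstoUniformlyOn_iff.mp hTU _ hδ] with m hm z hz
    have hd := hm z hz
    set d : ℂ := S z - (∑ k ∈ Finset.range m, T k z) with hdd
    rw [dist_eq_norm] at hd
    have hd1 : ‖d‖ ≤ 1 := le_of_lt (lt_of_lt_of_le hd (min_le_left _ _))
    have hd2 : ‖d‖ < ε / (2 * Real.exp 2 + 1) := lt_of_lt_of_le hd (min_le_right _ _)
    have key : Complex.exp (-(∑ k ∈ Finset.range m, T k z))
        = Complex.exp (-(S z)) * Complex.exp d := by
      rw [← Complex.exp_add]; congr 1; rw [hdd]; ring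
    rw [dist_eq_norm, key]
    have heq2 : Complex.exp (-(S z)) - Complex.exp (-(S z)) * Complex.exp d
        = Complex.exp (-(S z)) * (1 - Complex.exp d) := by ring
    rw [heq2, norm_mul]
    have h1 : ‖Complex.exp (-(S z))‖ ≤ Real.exp 2 := by
      rw [Complex.norm_exp]
      apply Real.exp_le_exp.2
      calc (-(S z)).re ≤ ‖-(S z)‖ := Complex.re_le_norm _
        _ = ‖S z‖ := by rw [norm_neg]
        _ ≤ 2 := hSb z hz
    have h2 : ‖1 - Complex.exp d‖ ≤ 2 * ‖d‖ := by
      rw [← norm_neg, neg_sub]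
      simpa using
        Complex.norm_exp_sub_one_le (x := d) hd1
    calc ‖Complex.exp (-(S z))‖ * ‖1 - Complex.exp d‖ ≤ Real.exp 2 * (2 * ‖d‖) :=
          mul_le_mul h1 h2 (norm_nonneg _) (Real.exp_pos 2).le
      _ < ε := by
          have he : (0:ℝ) < Real.exp 2 := Real.exp_pos 2
          rw [lt_div_iff₀ (by positivity)] at hd2
          nlinarith [norm_nonneg d]
  obtain ⟨Cp, hCp⟩ : ∃ Cp : ℝ, ∀ z ∈ s, ‖wProd c J z‖ ≤ Cp := by
    obtain ⟨Cp, hCp⟩ := (isCompact_closedBall (0:ℂ) R).exists_bound_of_continuousOn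
      ((wProd_diff c J).continuous.continuousOn)
    exact ⟨Cp, hCp⟩
  have hCp0 : 0 ≤ Cp := le_trans (norm_nonneg _)
    (hCp 0 (by simp [s, mem_closedBall_zero_iff, hR.le]))
  have hmulU : TendstoUniformlyOn
      (fun m z => wProd c J z * Complex.exp (-(∑ k ∈ Finset.range m, T k z)))
      (fun z => wProd c J z * Complex.exp (-(S z))) atTop s := by
    rw [Metric.tendstoUniformlyOn_iff]
    intro ε hε
    have hε' : 0 < ε / (Cp + 1) := by positivity
    filter_upwards [Metric.tendstoUniformlyOn_iff.mp hexpU _ hε'] with m hm z hz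
    rw [dist_eq_norm, ← mul_sub, norm_mul]
    have hm' := hm z hz
    rw [dist_eq_norm] at hm'
    calc ‖wProd c J z‖ * ‖Complex.exp (-(S z)) - Complex.exp (-(∑ k ∈ Finset.range m, T k z))‖
        ≤ Cp * (ε / (Cp + 1)) :=
          mul_le_mul (hCp z hz) hm'.le (norm_nonneg _) hCp0
      _ < ε := by
          rw [mul_div_assoc', div_lt_iff₀ (by positivity)]
          nlinarith
  have hshift : ∀ m : ℕ, ∀ z ∈ s, wProd c (J + m) z
      = wProd c J z * Complex.exp (-(∑ k ∈ Finset.range m, T k z)) := by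
    intro m z hz
    unfold wProd
    rw [Finset.prod_range_add]
    congr 1
    have hfac : ∀ k ∈ Finset.range m, wFactor (c (J+k)) (J+k) z = Complex.exp (-(T k z)) := by
      intro k _
      exact factor_eq (hhalf (J+k) (Nat.le_add_right _ _) z hz) (J+k)
    rw [Finset.prod_congr rfl hfac, ← Complex.exp_sum, ← Finset.sum_neg_distrib]
  set WR : ℂ → ℂ := fun z => wProd c J z * Complex.exp (-(S z)) with hWR
  have hshiftU : TendstoUniformlyOn (fun m => wProd c (J + m)) WR atTop s :=
    hmulU.congr (Eventually.of_forall (fun m z hz => (hshift m z hz).symm))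
  refine ⟨WR, ?_⟩
  rw [Metric.tendstoUniformlyOn_iff]
  intro ε hε
  obtain ⟨a, ha⟩ := eventually_atTop.mp (Metric.tendstoUniformlyOn_iff.mp hshiftU ε hε)
  rw [eventually_atTop]
  refine ⟨J + a, fun n hn z hz => ?_⟩
  have h1 : J ≤ n := le_trans (Nat.le_add_right _ _) hn
  have h2 : a ≤ n - J := by omega
  have := ha (n - J) h2 z hz
  rwa [Nat.add_sub_cancel' h1] at this

lemma exists_entire_vanishing (c : ℕ → ℂ) (hc0 : ∀ j, c j ≠ 0)
    (hcn : Tendsto (fun j => ‖c j‖) atTop atTop) :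
    ∃ W : ℂ → ℂ, Differentiable ℂ W ∧ W 0 = 1 ∧ ∀ j, W (c j) = 0 := by
  set W := wLim c with hWdef
  have hptw : ∀ z : ℂ, Tendsto (fun n => wProd c n z) atTop (𝓝 (W z)) := by
    intro z
    obtain ⟨WR, hWR⟩ := wProd_unif c hc0 hcn (R := ‖z‖ + 1) (by positivity)
    have hz : z ∈ closedBall (0:ℂ) (‖z‖+1) := by
      rw [mem_closedBall_zero_iff]; linarith
    have ht := hWR.tendsto_at hz
    have heq : W z = WR z := ht.limUnder_eq
    rw [heq]; exact ht
  have hloc : TendstoLocallyUniformlyOn (wProd c) W atTop univ := by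
    rw [tendstoLocallyUniformlyOn_iff_forall_isCompact isOpen_univ]
    intro K _ hK
    obtain ⟨r, hr⟩ := hK.isBounded.subset_closedBall (0:ℂ)
    have hr' : K ⊆ closedBall (0:ℂ) (max r 1) :=
      hr.trans (closedBall_subset_closedBall (le_max_left _ _))
    obtain ⟨WR, hWR⟩ := wProd_unif c hc0 hcn (R := max r 1)
      (lt_of_lt_of_le one_pos (le_max_right _ _))
    have heq : EqOn WR W (closedBall (0:ℂ) (max r 1)) := fun z hz =>
      tendsto_nhds_unique (hWR.tendsto_at hz) (hptw z)
    exact (hWR.congr_right heq).mono hr'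
  have hdiff : Differentiable ℂ W := by
    rw [← differentiableOn_univ]
    exact hloc.differentiableOn
      (Eventually.of_forall fun n => (wProd_diff c n).differentiableOn) isOpen_univ
  refine ⟨W, hdiff, ?_, ?_⟩
  · have h1 : ∀ n, wProd c n 0 = 1 := by
      intro n; unfold wProd; exact Finset.prod_eq_one fun j _ => wFactor_zero _ _
    have ht := hptw 0
    simp_rw [h1] at ht
    exact tendsto_nhds_unique ht tendsto_const_nhds
  · intro j
    have hev : (fun n => wProd c n (c j)) =ᶠ[atTop] (fun _ => (0:ℂ)) := by
      filter_upwards [eventually_gt_atTop j] with n hn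
      exact Finset.prod_eq_zero (Finset.mem_range.mpr hn) (wFactor_self (hc0 j) j)
    exact tendsto_nhds_unique (hptw (c j)) (tendsto_const_nhds.congr' hev.symm)

end AuxWeierstrass

/-- Lemma 2.6: existence of a holomorphic function `f : X × ℂ → ℂ` which is
small on `T × K`, has prescribed leading term `β(x) ζ^r` at `ζ = 0`, vanishes to order `N`
at the points `a_i ≠ 0`, and vanishes at the points of a discrete sequence `(c_j) ⊆ ℂ \ {0}`. -/
theorem technical_lemma
    {M : ℕ} (X : Set (Cn M)) (hX : IsComplexSubmanifold X)
    (T : Set (Cn M)) (hTcp : IsCompact T) (hTX : T ⊆ X)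
    (K : Set ℂ) (hKcp : IsCompact K) (hKcv : Convex ℝ K) (h0K : (0 : ℂ) ∉ K)
    (i₀ : ℕ) (a : Fin i₀ → ℂ) (ha : ∀ i, a i ≠ 0)
    (c : ℕ → ℂ) (hc0 : ∀ j, c j ≠ 0) (hcdisc : Tendsto c atTop (cocompact ℂ))
    (β : Cn M → ℂ) (hβ : HoloOn X β)
    (ε : ℝ) (hε : 0 < ε) (r Nd : ℕ) (hr : 1 ≤ r) (hNd : 1 ≤ Nd) :
    ∃ f : Cn M × ℂ → ℂ, HoloOn (X ×ˢ (univ : Set ℂ)) f ∧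
      (∀ x ∈ T, ∀ ζ ∈ K, ‖f (x, ζ)‖ < ε) ∧
      (∀ x ∈ X, (fun ζ : ℂ => f (x, ζ) - β x * ζ ^ r) =O[𝓝 (0 : ℂ)]
        fun ζ : ℂ => ‖ζ‖ ^ (r + 1)) ∧
      (∀ x ∈ X, ∀ i : Fin i₀,
        (fun ζ : ℂ => f (x, ζ)) =O[𝓝 (a i)] fun ζ : ℂ => ‖ζ - a i‖ ^ Nd) ∧
      (∀ x ∈ X, ∀ j : ℕ, f (x, c j) = 0) := by
  -- continuity of β on X
  have hβc : ContinuousOn β X := by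
    intro p hp
    obtain ⟨U, hUo, hpU, gβ, hgd, hEq⟩ := hβ p hp
    have hg : ContinuousWithinAt gβ (X ∩ U) p :=
      (hgd.continuousOn p hpU).mono inter_subset_right
    have hb : ContinuousWithinAt β (X ∩ U) p :=
      hg.congr (fun y hy => hEq hy) (hEq ⟨hp, hpU⟩)
    exact (continuousWithinAt_inter (hUo.mem_nhds hpU)).mp hb
  -- separating linear functional
  obtain ⟨φ, u, v, hu, huv, hv⟩ :=
    geometric_hahn_banach_compact_closed (s := K) (t := {(0:ℂ)}) hKcv hKcp
      (convex_singleton 0) isClosed_singleton (disjoint_singleton_right.mpr h0K)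
  have hv0 : v < 0 := by simpa using hv 0 rfl
  have hu0 : u < 0 := huv.trans hv0
  set μ : ℂ := (φ 1 : ℂ) - (φ Complex.I : ℂ) * Complex.I with hμdef
  have hμ : ∀ ζ : ℂ, (μ * ζ).re = φ ζ := by
    intro ζ
    have hzeq : (ζ.re • (1:ℂ) + ζ.im • Complex.I) = ζ := by
      simp [Complex.real_smul, Complex.re_add_im]
    have hφζ : φ ζ = φ 1 * ζ.re + φ Complex.I * ζ.im := by
      conv_lhs => rw [← hzeq]
      rw [map_add, map_smul, map_smul, smul_eq_mul, smul_eq_mul]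
      ring
    rw [hφζ, hμdef]
    simp [Complex.mul_re, Complex.sub_re, Complex.sub_im, Complex.mul_im]
  -- entire function vanishing at the c j
  obtain ⟨W, hWd, hW0, hWc⟩ := exists_entire_vanishing c hc0
    (tendsto_norm_cocompact_atTop.comp hcdisc)
  -- the finite product
  set A : ℂ → ℂ := fun ζ => ∏ i : Fin i₀, ((ζ - a i) / (-(a i))) ^ Nd with hAdef
  have hAd : Differentiable ℂ A := by
    apply Differentiable.fun_finsetProd
    intro i _
    exact ((differentiable_id.sub_const (a i)).div_const _).pow _
  have hA0 : A 0 = 1 := by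
    rw [hAdef]
    apply Finset.prod_eq_one
    intro i _
    rw [zero_sub, div_self (neg_ne_zero.mpr (ha i)), one_pow]
  -- bound for the non-exponential part on T × K
  set Φ : Cn M × ℂ → ℝ := fun w => ‖β w.1‖ * ‖w.2 ^ r * A w.2 * W w.2‖ with hΦdef
  have hΦc : ContinuousOn Φ (T ×ˢ K) := by
    apply ContinuousOn.mul
    · exact ((hβc.mono hTX).comp continuousOn_fst (fun w hw => hw.1)).norm
    · apply Continuous.continuousOn
      exact (((continuous_snd.pow r).mul (hAd.continuous.comp continuous_snd)).mul
        (hWd.continuous.comp continuous_snd)).norm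
  obtain ⟨C, hC⟩ := (hTcp.prod hKcp).exists_bound_of_continuousOn hΦc
  set C₀ : ℝ := |C| + 1 with hC₀def
  have hC₀pos : 0 < C₀ := by positivity
  have hΦle : ∀ w ∈ T ×ˢ K, Φ w ≤ C₀ := by
    intro w hw
    calc Φ w ≤ ‖Φ w‖ := le_abs_self _
      _ ≤ C := hC w hw
      _ ≤ |C| := le_abs_self _
      _ ≤ C₀ := by rw [hC₀def]; linarith
  -- choose the exponential scaling parameter
  obtain ⟨s, hsC, hs0⟩ : ∃ s : ℝ, C₀ * Real.exp (s * u) < ε ∧ 0 ≤ s := by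
    have h1 : Tendsto (fun s : ℝ => s * u) atTop atBot :=
      Filter.tendsto_id.atTop_mul_const_of_neg hu0
    have h2 : Tendsto (fun s : ℝ => C₀ * Real.exp (s * u)) atTop (𝓝 (C₀ * 0)) :=
      (Real.tendsto_exp_atBot.comp h1).const_mul C₀
    rw [mul_zero] at h2
    obtain ⟨s, h1', h2'⟩ := ((h2.eventually_lt_const hε).and (eventually_ge_atTop 0)).exists
    exact ⟨s, h1', h2'⟩
  -- the function
  set G : ℂ → ℂ := fun ζ => A ζ * Complex.exp ((s : ℂ) * (μ * ζ)) * W ζ with hGdef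
  have hGd : Differentiable ℂ G :=
    (hAd.mul ((differentiable_const _).mul (differentiable_const _|>.mul differentiable_id)).cexp).mul hWd
  have hG0 : G 0 = 1 := by
    simp [hGdef, hA0, hW0]
  set g : ℂ → ℂ := fun ζ => ζ ^ r * G ζ with hgdef
  have hgd : Differentiable ℂ g := (differentiable_id.pow r).mul hGd
  refine ⟨fun w => β w.1 * g w.2, ?_, ?_, ?_, ?_, ?_⟩
  · -- HoloOn
    rintro ⟨p, ζ⟩ ⟨hp, -⟩
    obtain ⟨U, hUo, hpU, gβ, hgβd, hEq⟩ := hβ p hp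
    refine ⟨U ×ˢ univ, hUo.prod isOpen_univ, ⟨hpU, mem_univ _⟩,
      fun w => gβ w.1 * g w.2, ?_, ?_⟩
    · apply DifferentiableOn.mul
      · exact hgβd.comp differentiable_fst.differentiableOn (fun w hw => hw.1)
      · exact ((hgd.comp differentiable_snd).differentiableOn)
    · rintro ⟨x, ζ'⟩ ⟨⟨hxX, -⟩, hxU, -⟩
      show β x * g ζ' = gβ x * g ζ'
      rw [hEq ⟨hxX, hxU⟩]
  · -- smallness on T × K
    intro x hx ζ hζ
    have hexp : ‖Complex.exp ((s : ℂ) * (μ * ζ))‖ ≤ Real.exp (s * u) := by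
      rw [Complex.norm_exp]
      apply Real.exp_le_exp.2
      have : ((s : ℂ) * (μ * ζ)).re = s * (μ * ζ).re := by
        simp [Complex.mul_re]
      rw [this, hμ ζ]
      exact mul_le_mul_of_nonneg_left (hu ζ hζ).le hs0
    have hnorm : ‖β x * g ζ‖ = Φ (x, ζ) * ‖Complex.exp ((s : ℂ) * (μ * ζ))‖ := by
      have heq : β x * g ζ = β x * (ζ ^ r * A ζ * W ζ) * Complex.exp ((s:ℂ) * (μ * ζ)) := by
        simp only [hgdef, hGdef]; ring
      rw [heq, norm_mul, norm_mul]
    calc ‖β x * g ζ‖ = Φ (x, ζ) * ‖Complex.exp ((s : ℂ) * (μ * ζ))‖ := hnorm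
      _ ≤ C₀ * Real.exp (s * u) := by
          apply mul_le_mul (hΦle (x, ζ) ⟨hx, hζ⟩) hexp (norm_nonneg _)
          exact hC₀pos.le
      _ < ε := hsC
  · -- behavior at 0
    intro x hx
    have hGbig : (fun ζ : ℂ => G ζ - 1) =O[𝓝 (0 : ℂ)] (fun ζ : ℂ => ζ) := by
      have := (hGd 0).isBigO_sub
      simpa [hG0] using this
    have h1 : (fun ζ : ℂ => β x * g ζ - β x * ζ ^ r)
        = fun ζ : ℂ => β x * (ζ ^ r * (G ζ - 1)) := by
      funext ζ
      simp only [hgdef]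
      ring
    rw [h1]
    have h2 : (fun ζ : ℂ => ζ ^ r * (G ζ - 1)) =O[𝓝 (0:ℂ)] fun ζ : ℂ => ζ ^ r * ζ :=
      (isBigO_refl (fun ζ : ℂ => ζ ^ r) _).mul hGbig
    have h3 : (fun ζ : ℂ => ζ ^ r * ζ) =O[𝓝 (0:ℂ)] fun ζ : ℂ => ‖ζ‖ ^ (r + 1) := by
      apply isBigO_of_le
      intro ζ
      rw [norm_mul, norm_pow, Real.norm_eq_abs, abs_pow, abs_norm, pow_succ]
    exact (h2.trans h3).const_mul_left (β x)
  · -- vanishing at the a i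
    intro x hx i
    have hfeq : (fun ζ : ℂ => β x * g ζ)
        = fun ζ : ℂ => (ζ - a i) ^ Nd *
          (β x * ζ ^ r * (((-(a i))⁻¹) ^ Nd *
            ∏ i' ∈ Finset.univ.erase i, ((ζ - a i') / (-(a i'))) ^ Nd) *
            (Complex.exp ((s : ℂ) * (μ * ζ)) * W ζ)) := by
      funext ζ
      have hA : A ζ = ((ζ - a i) / (-(a i))) ^ Nd *
          ∏ i' ∈ Finset.univ.erase i, ((ζ - a i') / (-(a i'))) ^ Nd :=
        (Finset.mul_prod_erase _ _ (Finset.mem_univ i)).symm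
      simp only [hgdef, hGdef]
      rw [hA, div_eq_mul_inv, mul_pow]
      ring
    rw [hfeq]
    have h1 : (fun ζ : ℂ => (ζ - a i) ^ Nd) =O[𝓝 (a i)] fun ζ : ℂ => ‖ζ - a i‖ ^ Nd := by
      apply isBigO_of_le
      intro ζ
      rw [norm_pow, Real.norm_eq_abs, abs_pow, abs_norm]
    have h2 : (fun ζ : ℂ => β x * ζ ^ r * (((-(a i))⁻¹) ^ Nd *
          ∏ i' ∈ Finset.univ.erase i, ((ζ - a i') / (-(a i'))) ^ Nd) *
          (Complex.exp ((s : ℂ) * (μ * ζ)) * W ζ)) =O[𝓝 (a i)] (fun _ => (1:ℝ)) := by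
      apply Filter.Tendsto.isBigO_one
      apply Continuous.tendsto
      apply Continuous.mul
      · apply Continuous.mul
        · exact continuous_const.mul (continuous_id.pow r)
        · apply continuous_const.mul
          apply continuous_finset_prod
          intro i' _
          exact ((continuous_id.sub continuous_const).div_const _).pow _
      · exact ((continuous_const.mul (continuous_const.mul continuous_id)).cexp).mul
          hWd.continuous
    have h3 := h1.mul h2
    refine h3.trans (isBigO_of_le _ ?_)
    intro ζ
    simp
  · -- vanishing at the c j
    intro x hx j
    show β x * g (c j) = 0
    simp [hgdef, hGdef, hWc j]

end
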